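/- Recovery of the conditional: if m_{x,Y} is the conditional embedding of conditional BPA m_{Y|x}, and m_{X=x} is the deterministic BPA with m_{X=x}({x}) = 1 (vacuously extended to Ω_X × Ω_Y), then (m_{x,Y} ⊕ m_{X=x})↓Ω_Y = m_{Y|x}. -/
import Mathlib


/-- A basic probability assignment on a finite set `S`. -/
def IsBPA {S : Type*} [Fintype S] [DecidableEq S] (m : Finset S → ℝ) : Prop :=
  m ∅ = 0 ∧ (∀ a, 0 ≤ m a) ∧ (∀ a, m a ≤ 1) ∧ ∑ a : Finset S, m a = 1

/-- The embedded focal set `({x} × b) ∪ ((Ω_X \ {x}) × Ω_Y)`. -/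
def embSet {ΩX ΩY : Type*} [Fintype ΩX] [Fintype ΩY] [DecidableEq ΩX] [DecidableEq ΩY]
    (x : ΩX) (b : Finset ΩY) : Finset (ΩX × ΩY) :=
  ({x} ×ˢ b) ∪ (({x}ᶜ : Finset ΩX) ×ˢ (Finset.univ : Finset ΩY))

/-- Conditional embedding of a conditional BPA `m_{Y|x}` into a BPA on `Ω_X × Ω_Y`. -/
def condEmbed {ΩX ΩY : Type*} [Fintype ΩX] [Fintype ΩY] [DecidableEq ΩX] [DecidableEq ΩY]
    (x : ΩX) (mYx : Finset ΩY → ℝ) (c : Finset (ΩX × ΩY)) : ℝ :=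
  ∑ b ∈ Finset.univ.filter (fun b : Finset ΩY => embSet x b = c), mYx b

/-- Marginalization of a BPA on `Ω₁ × Ω₂` to `Ω₁`. -/
def margFst {Ω₁ Ω₂ : Type*} [Fintype Ω₁] [Fintype Ω₂] [DecidableEq Ω₁] [DecidableEq Ω₂]
    (m : Finset (Ω₁ × Ω₂) → ℝ) (a : Finset Ω₁) : ℝ :=
  ∑ b ∈ Finset.univ.filter (fun b : Finset (Ω₁ × Ω₂) => b.image Prod.fst = a), m b

/-- Marginalization of a BPA on `Ω₁ × Ω₂` to `Ω₂`. -/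
def margSnd {Ω₁ Ω₂ : Type*} [Fintype Ω₁] [Fintype Ω₂] [DecidableEq Ω₁] [DecidableEq Ω₂]
    (m : Finset (Ω₁ × Ω₂) → ℝ) (a : Finset Ω₂) : ℝ :=
  ∑ b ∈ Finset.univ.filter (fun b : Finset (Ω₁ × Ω₂) => b.image Prod.snd = a), m b
/-- Normalization constant of Dempster's rule. -/
def Kconst {Ω : Type*} [Fintype Ω] [DecidableEq Ω] (m₁ m₂ : Finset Ω → ℝ) : ℝ :=
  1 - ∑ b₁ : Finset Ω, ∑ b₂ : Finset Ω, if b₁ ∩ b₂ = ∅ then m₁ b₁ * m₂ b₂ else 0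

/-- Dempster's rule of combination on a common frame. -/
noncomputable def dempster {Ω : Type*} [Fintype Ω] [DecidableEq Ω] (m₁ m₂ : Finset Ω → ℝ) :
    Finset Ω → ℝ := fun a =>
  if a = ∅ then 0
  else (Kconst m₁ m₂)⁻¹ *
    ∑ b₁ : Finset Ω, ∑ b₂ : Finset Ω, if b₁ ∩ b₂ = a then m₁ b₁ * m₂ b₂ else 0

section Helpers

variable {ΩX ΩY : Type*} [Fintype ΩX] [Fintype ΩY] [DecidableEq ΩX] [DecidableEq ΩY]

lemma embSet_inter (x : ΩX) (b : Finset ΩY) :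
    embSet x b ∩ (({x} : Finset ΩX) ×ˢ (Finset.univ : Finset ΩY)) = ({x} : Finset ΩX) ×ˢ b := by
  ext ⟨p, q⟩
  simp [embSet]
  tauto

lemma image_snd_prod (x : ΩX) (b : Finset ΩY) :
    ((({x} : Finset ΩX) ×ˢ b).image Prod.snd) = b := by
  apply Finset.product_image_snd
  simp

lemma key_sum (x : ΩX) (mYx : Finset ΩY → ℝ) (a : Finset (ΩX × ΩY)) :
    ∑ b₁ : Finset (ΩX × ΩY),
      (if b₁ ∩ (({x} : Finset ΩX) ×ˢ (Finset.univ : Finset ΩY)) = a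
        then condEmbed x mYx b₁ else 0) =
    ∑ b' : Finset ΩY, if ({x} : Finset ΩX) ×ˢ b' = a then mYx b' else 0 := by
  unfold condEmbed
  simp only [Finset.sum_filter]
  have h1 : ∀ b₁ : Finset (ΩX × ΩY),
      (if b₁ ∩ (({x} : Finset ΩX) ×ˢ (Finset.univ : Finset ΩY)) = a
        then ∑ b' : Finset ΩY, (if embSet x b' = b₁ then mYx b' else 0) else 0) =
      ∑ b' : Finset ΩY, (if b₁ = embSet x b' then
        (if b₁ ∩ (({x} : Finset ΩX) ×ˢ (Finset.univ : Finset ΩY)) = a then mYx b' else 0)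
        else 0) := by
    intro b₁
    split_ifs with h
    · apply Finset.sum_congr rfl; intro b' _
      by_cases h2 : b₁ = embSet x b' <;> simp [h2, h, eq_comm]
    · refine (Finset.sum_eq_zero ?_).symm
      intro b' _
      by_cases h2 : b₁ = embSet x b' <;> simp [h2, h]
  simp only [h1]
  rw [Finset.sum_comm]
  apply Finset.sum_congr rfl
  intro b' _
  rw [Finset.sum_ite_eq' Finset.univ (embSet x b')]
  rw [if_pos (Finset.mem_univ _), embSet_inter]

lemma collapse_sum (x : ΩX) (mYx : Finset ΩY → ℝ) (a : Finset (ΩX × ΩY)) :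
    ∑ b₁ : Finset (ΩX × ΩY), ∑ b₂ : Finset (ΩX × ΩY),
      (if b₁ ∩ b₂ = a then condEmbed x mYx b₁ *
        (if b₂ = ({x} : Finset ΩX) ×ˢ (Finset.univ : Finset ΩY) then 1 else 0) else 0) =
    ∑ b' : Finset ΩY, if ({x} : Finset ΩX) ×ˢ b' = a then mYx b' else 0 := by
  rw [← key_sum]
  apply Finset.sum_congr rfl
  intro b₁ _
  rw [show (∑ b₂ : Finset (ΩX × ΩY),
      (if b₁ ∩ b₂ = a then condEmbed x mYx b₁ *
        (if b₂ = ({x} : Finset ΩX) ×ˢ (Finset.univ : Finset ΩY) then 1 else 0) else 0)) =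
      ∑ b₂ : Finset (ΩX × ΩY),
      (if b₂ = ({x} : Finset ΩX) ×ˢ (Finset.univ : Finset ΩY) then
        (if b₁ ∩ b₂ = a then condEmbed x mYx b₁ else 0) else 0) from by
    apply Finset.sum_congr rfl; intro b₂ _
    by_cases h : b₂ = ({x} : Finset ΩX) ×ˢ (Finset.univ : Finset ΩY) <;>
      by_cases h2 : b₁ ∩ b₂ = a <;> simp [h, h2]]
  rw [Finset.sum_ite_eq' Finset.univ]
  simp

lemma prod_singleton_eq_empty_iff (x : ΩX) (b : Finset ΩY) :
    ({x} : Finset ΩX) ×ˢ b = ∅ ↔ b = ∅ := by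
  simp [Finset.product_eq_empty]

end Helpers

theorem recovery_of_conditional
    {ΩX ΩY : Type*} [Fintype ΩX] [Fintype ΩY] [DecidableEq ΩX] [DecidableEq ΩY]
    (x : ΩX) (mYx : Finset ΩY → ℝ) (hm : IsBPA mYx) :
    let mdet : Finset (ΩX × ΩY) → ℝ :=
      fun c => if c = ({x} : Finset ΩX) ×ˢ (Finset.univ : Finset ΩY) then 1 else 0
    ∀ b : Finset ΩY, margSnd (dempster (condEmbed x mYx) mdet) b = mYx b := by
  intro mdet b
  obtain ⟨hm0, _, _, _⟩ := hm
  have hK : Kconst (condEmbed x mYx) mdet = 1 := by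
    unfold Kconst
    rw [collapse_sum]
    simp only [prod_singleton_eq_empty_iff]
    rw [Finset.sum_ite_eq' Finset.univ]
    simp [hm0]
  have hd : ∀ a : Finset (ΩX × ΩY), dempster (condEmbed x mYx) mdet a =
      ∑ b' : Finset ΩY, if ({x} : Finset ΩX) ×ˢ b' = a then mYx b' else 0 := by
    intro a
    unfold dempster
    by_cases ha : a = ∅
    · subst ha
      simp only [if_pos rfl]
      simp only [prod_singleton_eq_empty_iff]
      rw [Finset.sum_ite_eq' Finset.univ]
      simp [hm0]
    · rw [if_neg ha, hK, collapse_sum]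
      simp
  unfold margSnd
  simp only [Finset.sum_filter, hd]
  have hpush : ∀ c : Finset (ΩX × ΩY),
      (if c.image Prod.snd = b then
        ∑ b' : Finset ΩY, (if ({x} : Finset ΩX) ×ˢ b' = c then mYx b' else 0) else 0) =
      ∑ b' : Finset ΩY,
        (if c.image Prod.snd = b then
          (if ({x} : Finset ΩX) ×ˢ b' = c then mYx b' else 0) else 0) := by
    intro c
    split_ifs with h
    · rfl
    · simp
  simp only [hpush]
  rw [Finset.sum_comm]
  rw [show (∑ b' : Finset ΩY, ∑ c : Finset (ΩX × ΩY),
      (if c.image Prod.snd = b then (if ({x} : Finset ΩX) ×ˢ b' = c then mYx b' else 0) else 0)) =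
      ∑ b' : Finset ΩY, ∑ c : Finset (ΩX × ΩY),
      (if c = ({x} : Finset ΩX) ×ˢ b' then (if c.image Prod.snd = b then mYx b' else 0) else 0)
      from by
    apply Finset.sum_congr rfl; intro b' _
    apply Finset.sum_congr rfl; intro c _
    by_cases h : c = ({x} : Finset ΩX) ×ˢ b' <;>
      by_cases h2 : c.image Prod.snd = b <;> simp [h, h2, eq_comm]]
  have : ∀ b' : Finset ΩY, (∑ c : Finset (ΩX × ΩY),
      (if c = ({x} : Finset ΩX) ×ˢ b' then (if c.image Prod.snd = b then mYx b' else 0) else 0)) =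
      if b' = b then mYx b' else 0 := by
    intro b'
    rw [Finset.sum_ite_eq' Finset.univ]
    rw [if_pos (Finset.mem_univ _), image_snd_prod]
  simp only [this]
  rw [Finset.sum_ite_eq' Finset.univ]
  simp
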